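/- arXiv:2011.09514 — 2 statements merged into one kernel-verified Lean document; each statement's English description precedes it below -/
import Mathlib

section
/- Let X be a real random variable on a probability space (Ω, P) whose law is absolutely continuous with respect to Lebesgue measure with a density f : ℝ → ℝ that is monotone nondecreasing on (−∞, m] and monotone nonincreasing on [m, ∞) for some mode m ∈ ℝ, and suppose X has mean μ and finite, non-zero variance σ². Then P(|X − μ| ≥ √(80/9)·σ) ≤ 1/20, i.e., a two-tailed deviation of at least √(80/9) ≈ 2.981 standard deviations from the mean has probability at most 0.05. -/
open MeasureTheory ProbabilityTheory Real

section VPaux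
open MeasureTheory Set
open scoped NNReal ENNReal

lemma unimodal_measurable {g : ℝ → ℝ} {m : ℝ} (hmono : MonotoneOn g (Set.Iic m))
    (hanti : AntitoneOn g (Set.Ici m)) : Measurable g := by
  have h1 : Monotone (fun x => g (min x m)) := fun x y hxy =>
    hmono (min_le_right x m) (min_le_right y m) (min_le_min hxy le_rfl)
  have h2 : Antitone (fun x => g (max x m)) := fun x y hxy =>
    hanti (le_max_right x m) (le_max_right y m) (max_le_max hxy le_rfl)
  have hg : g = (Set.Iic m).piecewise (fun x => g (min x m)) (fun x => g (max x m)) := by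
    funext x
    by_cases hx : x ≤ m
    · simp [Set.piecewise, hx, min_eq_left hx]
    · simp [Set.piecewise, hx, max_eq_left (le_of_lt (lt_of_not_ge hx))]
  rw [hg]
  exact Measurable.piecewise measurableSet_Iic h1.measurable h2.measurable

lemma tail_set_integral_nonpos {g h : ℝ → ℝ} {m s : ℝ} (hs : 0 < s)
    (hmono : MonotoneOn g (Set.Iic m)) (hanti : AntitoneOn g (Set.Ici m))
    (hgint : Integrable g)
    (hloc : ∀ a b : ℝ, IntervalIntegrable h volume a b)
    (hR : ∀ b, m ≤ b → (∫ x in m..b, h x) ≤ 0)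
    (hL : ∀ a, a ≤ m → (∫ x in a..m, h x) ≤ 0) :
    (∫ x in {x | s < g x}, h x) ≤ 0 := by
  set E : Set ℝ := {x | s < g x} with hE
  rcases Set.eq_empty_or_nonempty E with hemp | ⟨e, he⟩
  · rw [hemp]; simp
  · -- finite measure
    have hfin : volume E ≠ ⊤ := by
      intro htop
      have h1 := mul_meas_ge_le_lintegral₀ (μ := volume) (f := fun x => ENNReal.ofReal (g x))
        ((ENNReal.measurable_ofReal.comp (unimodal_measurable hmono hanti)).aemeasurable)
        (ENNReal.ofReal s)
      have hsub : E ⊆ {x | ENNReal.ofReal s ≤ ENNReal.ofReal (g x)} := fun x hx =>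
        ENNReal.ofReal_le_ofReal (le_of_lt hx)
      have h2 : volume {x | ENNReal.ofReal s ≤ ENNReal.ofReal (g x)} = ⊤ :=
        top_le_iff.mp (htop ▸ measure_mono hsub)
      rw [h2, ENNReal.mul_top (by simp [ENNReal.ofReal_eq_zero, not_le.mpr hs])] at h1
      exact lt_irrefl ⊤ (lt_of_le_of_lt h1 hgint.lintegral_lt_top)
    have hbb : BddBelow E := by
      by_contra hnb
      have hsub : Set.Iic m ⊆ E := by
        intro y hy
        obtain ⟨z, hz, hzy⟩ := not_bddBelow_iff.mp hnb y
        have : g z ≤ g y := hmono (le_of_lt (hzy.trans_le hy)) hy (le_of_lt hzy)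
        exact lt_of_lt_of_le hz this
      exact hfin (top_le_iff.mp ((by simp : volume (Set.Iic m) = ⊤) ▸ measure_mono hsub))
    have hba : BddAbove E := by
      by_contra hnb
      have hsub : Set.Ici m ⊆ E := by
        intro y hy
        obtain ⟨z, hz, hzy⟩ := not_bddAbove_iff.mp hnb y
        have : g z ≤ g y := hanti hy (hy.trans (le_of_lt hzy)) (le_of_lt hzy)
        exact lt_of_lt_of_le hz this
      exact hfin (top_le_iff.mp ((by simp : volume (Set.Ici m) = ⊤) ▸ measure_mono hsub))
    have hme : m ∈ E := by
      have : g e ≤ g m := by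
        rcases le_total e m with h' | h'
        · exact hmono h' (Set.mem_Iic.mpr le_rfl) h'
        · exact hanti (Set.mem_Ici.mpr le_rfl) h' h'
      exact lt_of_lt_of_le he this
    set a := sInf E with ha
    set b := sSup E with hb
    have ham : a ≤ m := csInf_le hbb hme
    have hmb : m ≤ b := le_csSup hba hme
    have hIoo : Set.Ioo a b ⊆ E := by
      rintro y ⟨hay, hyb⟩
      rcases le_total y m with h' | h'
      · obtain ⟨p, hp, hpy⟩ := exists_lt_of_csInf_lt ⟨e, he⟩ hay
        exact lt_of_lt_of_le hp (hmono (le_of_lt (hpy.trans_le h')) h' (le_of_lt hpy))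
      · obtain ⟨q, hq, hyq⟩ := exists_lt_of_lt_csSup ⟨e, he⟩ hyb
        exact lt_of_lt_of_le hq (hanti h' (h'.trans (le_of_lt hyq)) (le_of_lt hyq))
    have hsubIcc : E ⊆ Set.Icc a b := fun x hx => ⟨csInf_le hbb hx, le_csSup hba hx⟩
    have haeq : E =ᵐ[volume] Set.Ioo a b := by
      rw [MeasureTheory.ae_eq_set]
      constructor
      · refine measure_mono_null (fun x hx => ?_) (?_ : volume ({a, b} : Set ℝ) = 0)
        · rcases hx with ⟨hxE, hxn⟩
          have := hsubIcc hxE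
          rcases eq_or_lt_of_le this.1 with h1 | h1
          · exact Or.inl h1.symm
          · rcases eq_or_lt_of_le this.2 with h2 | h2
            · exact Or.inr h2
            · exact absurd ⟨h1, h2⟩ hxn
        · exact (Set.toFinite ({a, b} : Set ℝ)).measure_zero volume
      · have hd : Set.Ioo a b \ E = ∅ := Set.diff_eq_empty.mpr hIoo
        rw [hd]; simp
    calc (∫ x in E, h x) = ∫ x in Set.Ioo a b, h x := setIntegral_congr_set haeq
      _ = ∫ x in Set.Ioc a b, h x := setIntegral_congr_set Ioo_ae_eq_Ioc
      _ = ∫ x in a..b, h x := (intervalIntegral.integral_of_le (ham.trans hmb)).symm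
      _ = (∫ x in a..m, h x) + ∫ x in m..b, h x :=
          (intervalIntegral.integral_add_adjacent_intervals (hloc a m) (hloc m b)).symm
      _ ≤ 0 := add_nonpos (hL a ham) (hR b hmb)

lemma unimodal_integral_nonpos {g h : ℝ → ℝ} {m : ℝ}
    (hg0 : ∀ x, 0 ≤ g x)
    (hmono : MonotoneOn g (Set.Iic m)) (hanti : AntitoneOn g (Set.Ici m))
    (hgint : Integrable g)
    (hh : Measurable h)
    (hloc : ∀ a b : ℝ, IntervalIntegrable h volume a b)
    (hhg : Integrable (fun x => h x * g x))
    (hR : ∀ b, m ≤ b → (∫ x in m..b, h x) ≤ 0)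
    (hL : ∀ a, a ≤ m → (∫ x in a..m, h x) ≤ 0) :
    (∫ x, h x * g x) ≤ 0 := by
  have hgm : Measurable g := unimodal_measurable hmono hanti
  set F : ℝ → ℝ → ℝ := fun x s => Set.indicator (Set.Ioo (0:ℝ) (g x)) (fun _ => h x) s with hFdef
  have hSmeas : MeasurableSet {p : ℝ × ℝ | 0 < p.2 ∧ p.2 < g p.1} :=
    (measurableSet_lt measurable_const measurable_snd).inter
      (measurableSet_lt measurable_snd (hgm.comp measurable_fst))
  have hFeq : Function.uncurry F = Set.indicator {p : ℝ × ℝ | 0 < p.2 ∧ p.2 < g p.1}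
      (fun p => h p.1) := by
    funext p
    rcases p with ⟨x, s⟩
    simp only [Function.uncurry, hFdef, Set.indicator_apply, Set.mem_Ioo, Set.mem_setOf_eq]
  have hFmeas : AEStronglyMeasurable (Function.uncurry F) (volume.prod volume) := by
    rw [hFeq]
    exact ((hh.comp measurable_fst).indicator hSmeas).aestronglyMeasurable
  -- integrability on product
  have hnormsect : ∀ x, (∫ s, ‖F x s‖) = ‖h x * g x‖ := by
    intro x
    have : (fun s => ‖F x s‖) = Set.indicator (Set.Ioo (0:ℝ) (g x)) (fun _ => ‖h x‖) := by
      funext s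
      simp only [hFdef, Set.indicator_apply]
      split_ifs <;> simp
    rw [this, integral_indicator_const _ measurableSet_Ioo]
    simp [Real.volume_Ioo, norm_mul, abs_mul]
    rw [max_eq_left (hg0 x)]
    rw [abs_of_nonneg (hg0 x)]
    ring
  have hFint : Integrable (Function.uncurry F) (volume.prod volume) := by
    rw [integrable_prod_iff hFmeas]
    constructor
    · refine Filter.Eventually.of_forall (fun x => ?_)
      have hlt : volume (Set.Ioo (0:ℝ) (g x)) < ⊤ := measure_Ioo_lt_top
      have hind : Integrable (Set.indicator (Set.Ioo (0:ℝ) (g x)) (fun _ => h x)) volume :=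
        (integrable_indicator_iff measurableSet_Ioo).mpr
          ((integrableOn_const_iff (C := h x)).mpr (Or.inr hlt))
      exact hind
    · have : (fun x => ∫ s, ‖Function.uncurry F (x, s)‖) = fun x => ‖h x * g x‖ := by
        funext x; exact hnormsect x
      rw [this]
      exact hhg.norm
  -- pointwise section integral
  have hsect : ∀ x, (∫ s, F x s) = h x * g x := by
    intro x
    rw [hFdef]
    rw [integral_indicator_const _ measurableSet_Ioo]
    simp [Real.volume_Ioo]
    rw [max_eq_left (hg0 x)]
    ring
  have hswap : (∫ x, h x * g x) = ∫ s, ∫ x, F x s := by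
    rw [← integral_integral_swap hFint]
    exact (integral_congr_ae (Filter.Eventually.of_forall (fun x => (hsect x).symm)))
  rw [hswap]
  -- a.e. slice nonpositive
  refine integral_nonpos_of_ae ?_
  have hslice := hFint.prod_left_ae
  filter_upwards [hslice] with s hsint
  rcases le_or_gt s 0 with hs | hs
  · have : (fun x => F x s) = fun _ => (0:ℝ) := by
      funext x
      simp only [hFdef, Set.indicator_apply, Set.mem_Ioo]
      rw [if_neg (by intro hc; linarith [hc.1])]
    rw [this]; simp
  · have heq : (fun x => F x s) = Set.indicator {x | s < g x} h := by
      funext x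
      simp only [hFdef, Set.indicator_apply, Set.mem_Ioo, Set.mem_setOf_eq]
      split_ifs with h1 h2 h2
      · rfl
      · exact absurd h1.2 h2
      · exact absurd ⟨hs, h2⟩ h1
      · rfl
    rw [heq, integral_indicator (measurableSet_lt measurable_const hgm)]
    exact tail_set_integral_nonpos hs hmono hanti hgint hloc hR hL

lemma ind_Ici_intervalIntegral (c d t : ℝ) (hcd : c ≤ d) :
    (∫ x in c..d, (Set.Ici t).indicator (fun _ => (1:ℝ)) x) = max d t - max c t := by
  rw [intervalIntegral.integral_of_le hcd, setIntegral_indicator measurableSet_Ici,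
    setIntegral_const, smul_eq_mul, mul_one]
  rcases le_or_gt t c with h1 | h1
  · have : Set.Ioc c d ∩ Set.Ici t = Set.Ioc c d := by
      apply Set.inter_eq_left.mpr
      intro x hx; exact le_trans h1 (le_of_lt hx.1)
    rw [this, measureReal_def, Real.volume_Ioc, ENNReal.toReal_ofReal (by linarith)]
    rw [max_eq_left (h1.trans hcd), max_eq_left h1]
  · rcases le_or_gt t d with h2 | h2
    · have : Set.Ioc c d ∩ Set.Ici t = Set.Icc t d := by
        ext x
        constructor
        · rintro ⟨⟨_, hxd⟩, hxt⟩; exact ⟨hxt, hxd⟩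
        · rintro ⟨hxt, hxd⟩; exact ⟨⟨lt_of_lt_of_le h1 hxt, hxd⟩, hxt⟩
      rw [this, measureReal_def, Real.volume_Icc, ENNReal.toReal_ofReal (by linarith)]
      rw [max_eq_left h2, max_eq_right h1.le]
    · have : Set.Ioc c d ∩ Set.Ici t = ∅ := by
        ext x
        simp only [Set.mem_inter_iff, Set.mem_Ioc, Set.mem_Ici, Set.mem_empty_iff_false, iff_false]
        rintro ⟨⟨_, hxd⟩, hxt⟩; linarith
      rw [this]
      simp [max_eq_right h2.le, max_eq_right (hcd.trans h2.le)]

lemma ind_Iic_intervalIntegral (c d t : ℝ) (hcd : c ≤ d) :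
    (∫ x in c..d, (Set.Iic t).indicator (fun _ => (1:ℝ)) x) = min d t - min c t := by
  rw [intervalIntegral.integral_of_le hcd, setIntegral_indicator measurableSet_Iic,
    setIntegral_const, smul_eq_mul, mul_one]
  rcases le_or_gt d t with h1 | h1
  · have : Set.Ioc c d ∩ Set.Iic t = Set.Ioc c d := by
      apply Set.inter_eq_left.mpr
      intro x hx; exact le_trans hx.2 h1
    rw [this, measureReal_def, Real.volume_Ioc, ENNReal.toReal_ofReal (by linarith)]
    rw [min_eq_left h1, min_eq_left (hcd.trans h1)]
  · rcases le_or_gt c t with h2 | h2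
    · have : Set.Ioc c d ∩ Set.Iic t = Set.Ioc c t := by
        ext x
        constructor
        · rintro ⟨⟨hcx, _⟩, hxt⟩; exact ⟨hcx, hxt⟩
        · rintro ⟨hcx, hxt⟩; exact ⟨⟨hcx, hxt.trans h1.le⟩, hxt⟩
      rw [this, measureReal_def, Real.volume_Ioc, ENNReal.toReal_ofReal (by linarith)]
      rw [min_eq_right h1.le, min_eq_left h2]
    · have : Set.Ioc c d ∩ Set.Iic t = ∅ := by
        ext x
        simp only [Set.mem_inter_iff, Set.mem_Ioc, Set.mem_Iic, Set.mem_empty_iff_false, iff_false]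
        rintro ⟨⟨hcx, _⟩, hxt⟩; linarith
      rw [this]
      simp [min_eq_right (h2.le.trans hcd), min_eq_right h2.le]

lemma quad_intervalIntegral (c d A B C μ0 : ℝ) :
    (∫ x in c..d, (A*(x-μ0)^2 + B*(x-μ0) + C)) =
      A*((d-μ0)^3-(c-μ0)^3)/3 + B*((d-μ0)^2-(c-μ0)^2)/2 + C*(d-c) := by
  have hc : Continuous (fun x : ℝ => A*(x-μ0)^2 + B*(x-μ0) + C) := by continuity
  have : (∫ x in c..d, (A*(x-μ0)^2 + B*(x-μ0) + C)) =
      ∫ x in (c-μ0)..(d-μ0), (A*x^2 + B*x + C) := by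
    rw [← intervalIntegral.integral_comp_sub_right (fun x => A*x^2 + B*x + C) μ0]
  rw [this]
  have ia : IntervalIntegrable (fun x:ℝ => A*x^2) volume (c-μ0) (d-μ0) :=
    (by continuity : Continuous fun x:ℝ => A*x^2).intervalIntegrable _ _
  have ib : IntervalIntegrable (fun x:ℝ => B*x) volume (c-μ0) (d-μ0) :=
    (by continuity : Continuous fun x:ℝ => B*x).intervalIntegrable _ _
  rw [intervalIntegral.integral_add (ia.add ib) intervalIntegrable_const,
      intervalIntegral.integral_add ia ib,
      intervalIntegral.integral_const_mul, intervalIntegral.integral_const_mul,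
      integral_pow, integral_id, intervalIntegral.integral_const,
      smul_eq_mul]
  ring

lemma key_poly (r u n : ℝ) (hr : 0 < r) (hn : n^2 ≤ 27/80*r^2) (hu : r ≤ u) :
    0 ≤ 4*(u-3*r/2)^2*(u+3*r) + n^2*(57*u-60*r) - n^3 := by
  have hnb : n ≤ 3/5*r := by nlinarith [sq_nonneg n, sq_nonneg (n - 3/5*r)]
  have hn3 : n^3 ≤ 3/5*r*n^2 := by nlinarith [mul_nonneg (sq_nonneg n) (by linarith : (0:ℝ) ≤ 3/5*r - n)]
  rcases le_or_gt (57*u) (303/5*r) with hc | hc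
  · nlinarith [mul_nonneg (mul_nonneg hr.le (sub_nonneg.mpr hu)) (sub_nonneg.mpr hu),
      mul_nonneg (mul_nonneg (mul_nonneg hr.le hr.le) hr.le) (sub_nonneg.mpr hu),
      mul_pos (mul_pos hr hr) hr,
      mul_nonneg (sub_nonneg.mpr hu) (sub_nonneg.mpr hn),
      mul_nonneg hr.le (sub_nonneg.mpr hn),
      mul_nonneg (mul_nonneg hr.le hr.le) (sub_nonneg.mpr hu)]
  · nlinarith [mul_nonneg (sq_nonneg (u-3*r/2)) (by linarith : (0:ℝ) ≤ u + 3*r),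
      mul_nonneg (sq_nonneg n) (by linarith : (0:ℝ) ≤ 57*u - 303/5*r)]

lemma key2 (σ r u n : ℝ) (hσ : 0 < σ) (hr2 : r^2 = 80/9*σ^2) (hr : 0 < r)
    (hn : n^2 ≤ 3*σ^2) (hu : r ≤ u) :
    12*(20*σ^2 - 5*n^2)*(u - r) ≤ (u - n)*(2*u + n)^2 := by
  have h9 : σ^2 = 9/80*r^2 := by linarith
  have hn' : n^2 ≤ 27/80*r^2 := by nlinarith
  have h10 : σ^2*(u-r) = 9/80*r^2*(u-r) := by rw [h9]
  have hk := key_poly r u n hr hn' hu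
  nlinarith [hk, h10]

lemma ind_intervalIntegrable {s : Set ℝ} (hs : MeasurableSet s) (a b : ℝ) :
    IntervalIntegrable (s.indicator fun _ => (1:ℝ)) volume a b := by
  rw [intervalIntegrable_iff]
  have hlt : volume (Set.uIoc a b) < ⊤ := measure_Ioc_lt_top
  refine Integrable.mono' ((integrableOn_const_iff (C := (1:ℝ))).mpr (Or.inr hlt))
    ((measurable_one.indicator hs).aestronglyMeasurable.restrict) ?_
  refine Filter.Eventually.of_forall (fun x => ?_)
  by_cases hx : x ∈ s <;> simp [Set.indicator_apply, hx]

lemma withDensity_integral_eq {g : ℝ → ℝ} (hg0 : ∀ x, 0 ≤ g x) (hgm : Measurable g) (v : ℝ → ℝ) :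
    (∫ x, v x ∂(volume.withDensity (fun x => ENNReal.ofReal (g x)))) = ∫ x, v x * g x := by
  have he : (fun x => ENNReal.ofReal (g x)) = (fun x => (((fun y => (g y).toNNReal) x : ℝ≥0) : ℝ≥0∞)) := rfl
  rw [he, integral_withDensity_eq_integral_smul hgm.real_toNNReal v]
  congr 1
  funext x
  rw [NNReal.smul_def, Real.coe_toNNReal', max_eq_left (hg0 x), smul_eq_mul]
  ring

lemma withDensity_integrable_iff {g : ℝ → ℝ} (hg0 : ∀ x, 0 ≤ g x) (hgm : Measurable g) (v : ℝ → ℝ) :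
    Integrable v (volume.withDensity (fun x => ENNReal.ofReal (g x))) ↔
      Integrable (fun x => v x * g x) volume := by
  have he : (fun x => ENNReal.ofReal (g x)) = (fun x => (((fun y => (g y).toNNReal) x : ℝ≥0) : ℝ≥0∞)) := rfl
  rw [he, integrable_withDensity_iff_integrable_smul₀ hgm.real_toNNReal.aemeasurable]
  have : (fun x => (g x).toNNReal • v x) = fun x => v x * g x := by
    funext x
    rw [NNReal.smul_def, Real.coe_toNNReal', max_eq_left (hg0 x), smul_eq_mul]
    ring
  rw [this]

end VPaux
set_option maxHeartbeats 1000000 in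
/-- For a unimodal random variable `X` (law absolutely continuous with a density nondecreasing
on `(-∞, m]` and nonincreasing on `[m, ∞)`) with mean `μ` and finite non-zero variance `σ²`,
a two-tailed deviation of at least `√(80/9)` standard deviations from the mean has probability
at most `1/20 = 0.05`. -/
theorem vysochanskij_petunin_two_tailed_05
    {Ω : Type*} [MeasurableSpace Ω] (P : Measure Ω) [IsProbabilityMeasure P]
    (X : Ω → ℝ) (hX : Measurable X)
    (f : ℝ → ℝ) (m : ℝ)
    (hlaw : Measure.map X P = volume.withDensity (fun x => ENNReal.ofReal (f x)))
    (hmono : MonotoneOn f (Set.Iic m)) (hanti : AntitoneOn f (Set.Ici m))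
    (μ σ : ℝ) (hμ : μ = ∫ ω, X ω ∂P)
    (hfin : MemLp X 2 P)
    (hσ : σ ^ 2 = ∫ ω, (X ω - μ) ^ 2 ∂P) (hσpos : 0 < σ) :
    (P {ω | Real.sqrt (80 / 9) * σ ≤ |X ω - μ|}).toReal ≤ 1 / 20 := by
  classical
  set r : ℝ := Real.sqrt (80 / 9) * σ with hrdef
  have hr2 : r^2 = 80/9*σ^2 := by
    rw [hrdef, mul_pow, Real.sq_sqrt (by norm_num : (0:ℝ) ≤ 80/9)]
  have hrpos : 0 < r := mul_pos (Real.sqrt_pos.mpr (by norm_num)) hσpos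
  have hσ2pos : 0 < σ^2 := by positivity
  set n : ℝ := m - μ with hndef
  set g : ℝ → ℝ := fun x => max (f x) 0 with hgdef
  have hg0 : ∀ x, 0 ≤ g x := fun x => le_max_right _ _
  have hgmono : MonotoneOn g (Set.Iic m) := fun x hx y hy hxy =>
    max_le_max (hmono hx hy hxy) le_rfl
  have hganti : AntitoneOn g (Set.Ici m) := fun x hx y hy hxy =>
    max_le_max (hanti hx hy hxy) le_rfl
  have hgm : Measurable g := unimodal_measurable hgmono hganti
  have hofReal : (fun x => ENNReal.ofReal (f x)) = fun x => ENNReal.ofReal (g x) := by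
    funext x
    rcases le_total 0 (f x) with h | h
    · rw [hgdef]; simp only [max_eq_left h]
    · rw [hgdef]; simp only [max_eq_right h, ENNReal.ofReal_of_nonpos h, ENNReal.ofReal_zero]
  set ρ : Measure ℝ := volume.withDensity (fun x => ENNReal.ofReal (g x)) with hρdef
  have hlaw' : Measure.map X P = ρ := by rw [hlaw, hρdef, hofReal]
  haveI hρprob : IsProbabilityMeasure ρ := by
    rw [← hlaw']; exact Measure.isProbabilityMeasure_map hX.aemeasurable
  have hlint : (∫⁻ x, ENNReal.ofReal (g x)) = 1 := by
    have h := measure_univ (μ := ρ)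
    rwa [hρdef, withDensity_apply _ MeasurableSet.univ, Measure.restrict_univ] at h
  have hgint : Integrable g := by
    refine ⟨hgm.aestronglyMeasurable, ?_⟩
    rw [hasFiniteIntegral_iff_ofReal (Filter.Eventually.of_forall hg0)]
    rw [hlint]; exact ENNReal.one_lt_top
  have hXint : Integrable X P := hfin.integrable one_le_two
  have hX2int : Integrable (fun ω => (X ω - μ)^2) P := by
    have h := (hfin.sub (memLp_const μ)).integrable_sq
    simpa [Pi.sub_apply] using h
  have hIμρ : (∫ y, (y - μ) ∂ρ) = 0 := by
    rw [← hlaw', integral_map hX.aemeasurable (by fun_prop)]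
    have h : (∫ ω, (X ω - μ) ∂P) = (∫ ω, X ω ∂P) - μ := by
      rw [integral_sub hXint (integrable_const μ), integral_const]; simp
    rw [h, ← hμ, sub_self]
  have hIμint : Integrable (fun y => y - μ) ρ := by
    rw [← hlaw', integrable_map_measure (by fun_prop) hX.aemeasurable]
    exact hXint.sub (integrable_const μ)
  have hsqm : AEStronglyMeasurable (fun y : ℝ => (y - μ)^2) (Measure.map X P) :=
    ((measurable_id.sub_const μ).pow_const 2).aestronglyMeasurable
  have hI2ρ : (∫ y, (y - μ)^2 ∂ρ) = σ^2 := by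
    rw [← hlaw', integral_map hX.aemeasurable hsqm]
    exact hσ.symm
  have hI2int : Integrable (fun y => (y - μ)^2) ρ := by
    rw [← hlaw', integrable_map_measure hsqm hX.aemeasurable]
    exact hX2int
  -- Johnson–Rogers bound : (m - μ)² ≤ 3σ²
  have hJR : n^2 ≤ 3*σ^2 := by
    set h1 : ℝ → ℝ := fun x => (-3)*(x-μ)^2 + (-2*n)*(x-μ) + n^2 with hh1def
    have hcont1 : Continuous h1 := by rw [hh1def]; continuity
    have hloc1 : ∀ a b : ℝ, IntervalIntegrable h1 volume a b := fun a b =>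
      hcont1.intervalIntegrable a b
    have hint1ρ : Integrable h1 ρ := by
      rw [hh1def]
      exact ((hI2int.const_mul (-3)).add (hIμint.const_mul (-2*n))).add (integrable_const (n^2))
    have hint1v : Integrable (fun x => h1 x * g x) volume :=
      (withDensity_integrable_iff hg0 hgm h1).mp hint1ρ
    have hR1 : ∀ b, m ≤ b → (∫ x in m..b, h1 x) ≤ 0 := by
      intro b hb
      simp only [hh1def]
      rw [quad_intervalIntegral]
      nlinarith [mul_nonneg (sub_nonneg.mpr hb) (sq_nonneg ((b-μ)+(m-μ)))]
    have hL1 : ∀ a, a ≤ m → (∫ x in a..m, h1 x) ≤ 0 := by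
      intro a ha
      simp only [hh1def]
      rw [quad_intervalIntegral]
      nlinarith [mul_nonneg (sub_nonneg.mpr ha) (sq_nonneg ((a-μ)+(m-μ)))]
    have hcore := unimodal_integral_nonpos hg0 hgmono hganti hgint hcont1.measurable
      hloc1 hint1v hR1 hL1
    have hρle : (∫ x, h1 x ∂ρ) ≤ 0 := by
      rw [hρdef, withDensity_integral_eq hg0 hgm h1]; exact hcore
    have hcomp : (∫ x, h1 x ∂ρ) = -3*σ^2 + n^2 := by
      simp only [hh1def]
      have ha1 : Integrable (fun x : ℝ => (-3)*(x-μ)^2 + (-2*n)*(x-μ)) ρ :=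
        (hI2int.const_mul (-3)).add (hIμint.const_mul (-2*n))
      rw [integral_add ha1 (integrable_const (n^2)),
        integral_add (hI2int.const_mul (-3)) (hIμint.const_mul (-2*n)),
        integral_const_mul, integral_const_mul, integral_const, hI2ρ, hIμρ]
      simp
    rw [hcomp] at hρle
    linarith
  -- the certificate quadratic
  set D : ℝ := 20*σ^2 - 5*n^2 with hDdef
  have hD : 0 < D := by rw [hDdef]; nlinarith
  have hnr : -r < n ∧ n < r := by
    have h1 : n^2 < r^2 := by nlinarith
    have h2 : |n| < r := by
      rw [← Real.sqrt_sq hrpos.le, ← Real.sqrt_sq_eq_abs]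
      exact Real.sqrt_lt_sqrt (sq_nonneg n) h1
    exact abs_lt.mp h2
  have hμrm : μ - r < m := by
    have := hnr.1; rw [hndef] at this; linarith
  have hmμr : m < μ + r := by
    have := hnr.2; rw [hndef] at this; linarith
  set q : ℝ → ℝ := fun x => (1/D)*(x-μ)^2 + (0:ℝ)*(x-μ) + (-(n^2)/(4*D)) with hqdef
  have hcontq : Continuous q := by rw [hqdef]; continuity
  set S : Set ℝ := Set.Iic (μ - r) ∪ Set.Ici (μ + r) with hSdef
  have hSmeas : MeasurableSet S := measurableSet_Iic.union measurableSet_Ici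
  set φ : ℝ → ℝ := S.indicator (fun _ => (1:ℝ)) with hφdef
  have hφmeas : Measurable φ := measurable_const.indicator hSmeas
  have hdisj : Disjoint (Set.Iic (μ-r)) (Set.Ici (μ+r)) := by
    rw [Set.disjoint_left]
    intro x hx1 hx2
    simp only [Set.mem_Iic] at hx1
    simp only [Set.mem_Ici] at hx2
    linarith
  have hφsplit : ∀ x, φ x = (Set.Iic (μ-r)).indicator (fun _ => (1:ℝ)) x
      + (Set.Ici (μ+r)).indicator (fun _ => (1:ℝ)) x := by
    intro x
    rw [hφdef, hSdef, Set.indicator_union_of_disjoint hdisj]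
  have hφint : ∀ c d : ℝ, c ≤ d → (∫ x in c..d, φ x) =
      (min d (μ-r) - min c (μ-r)) + (max d (μ+r) - max c (μ+r)) := by
    intro c d hcd
    have h : (∫ x in c..d, φ x) = (∫ x in c..d, (Set.Iic (μ-r)).indicator (fun _ => (1:ℝ)) x)
        + ∫ x in c..d, (Set.Ici (μ+r)).indicator (fun _ => (1:ℝ)) x := by
      rw [← intervalIntegral.integral_add (ind_intervalIntegrable measurableSet_Iic c d)
        (ind_intervalIntegrable measurableSet_Ici c d)]
      exact intervalIntegral.integral_congr (fun x _ => hφsplit x)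
    rw [h, ind_Iic_intervalIntegral c d _ hcd, ind_Ici_intervalIntegral c d _ hcd]
  have hqm : ∀ b : ℝ, (∫ x in m..b, q x) = ((b-μ)-n)*(2*(b-μ)+n)^2/(12*D) := by
    intro b
    simp only [hqdef]
    rw [quad_intervalIntegral, ← hndef]
    field_simp
    ring
  have hqa : ∀ a : ℝ, (∫ x in a..m, q x) = (n-(a-μ))*(2*(a-μ)+n)^2/(12*D) := by
    intro a
    simp only [hqdef]
    rw [quad_intervalIntegral, ← hndef]
    field_simp
    ring
  have hRmain : ∀ b, m ≤ b → (∫ x in m..b, (φ x - q x)) ≤ 0 := by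
    intro b hb
    rw [intervalIntegral.integral_sub (by rw [hφdef]; exact ind_intervalIntegrable hSmeas m b)
      (hcontq.intervalIntegrable m b), sub_nonpos, hφint m b hb, hqm b,
      min_eq_right (hμrm.le.trans hb), min_eq_right hμrm.le, max_eq_right hmμr.le]
    rcases le_or_gt b (μ+r) with hc | hc
    · rw [max_eq_right hc]
      have hpos : 0 ≤ ((b-μ)-n)*(2*(b-μ)+n)^2/(12*D) := by
        apply div_nonneg _ (by linarith)
        apply mul_nonneg _ (sq_nonneg _)
        rw [hndef]; linarith
      linarith
    · rw [max_eq_left hc.le]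
      have hk := key2 σ r (b-μ) n hσpos hr2 hrpos hJR (by linarith)
      rw [le_div_iff₀ (by linarith : (0:ℝ) < 12*D)]
      rw [hDdef]
      nlinarith [hk]
  have hLmain : ∀ a, a ≤ m → (∫ x in a..m, (φ x - q x)) ≤ 0 := by
    intro a ha
    rw [intervalIntegral.integral_sub (by rw [hφdef]; exact ind_intervalIntegrable hSmeas a m)
      (hcontq.intervalIntegrable a m), sub_nonpos, hφint a m ha, hqa a,
      min_eq_right hμrm.le, max_eq_right hmμr.le, max_eq_right (ha.trans hmμr.le)]
    rcases le_or_gt (μ-r) a with hc | hc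
    · rw [min_eq_right hc]
      have hpos : 0 ≤ (n-(a-μ))*(2*(a-μ)+n)^2/(12*D) := by
        apply div_nonneg _ (by linarith)
        apply mul_nonneg _ (sq_nonneg _)
        rw [hndef]; linarith
      linarith
    · rw [min_eq_left hc.le]
      have hk := key2 σ r (μ-a) (-n) hσpos hr2 hrpos (by simpa using hJR) (by linarith)
      rw [le_div_iff₀ (by linarith : (0:ℝ) < 12*D)]
      rw [hDdef]
      nlinarith [hk]
  have hqρint : Integrable q ρ := by
    rw [hqdef]
    exact ((hI2int.const_mul _).add (hIμint.const_mul _)).add (integrable_const _)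
  have hφg : Integrable (fun x => φ x * g x) volume := by
    refine hgint.mono' ((hφmeas.mul hgm).aestronglyMeasurable)
      (Filter.Eventually.of_forall fun x => ?_)
    have hb1 : |φ x| ≤ 1 := by
      rw [hφdef]
      by_cases hx : x ∈ S <;> simp [Set.indicator_apply, hx]
    rw [norm_mul, Real.norm_eq_abs, Real.norm_eq_abs, abs_of_nonneg (hg0 x)]
    exact mul_le_of_le_one_left (hg0 x) hb1
  have hqg : Integrable (fun x => q x * g x) volume :=
    (withDensity_integrable_iff hg0 hgm q).mp hqρint
  have hsubint : Integrable (fun x => (φ x - q x) * g x) volume := by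
    have h : (fun x => (φ x - q x) * g x) = fun x => φ x * g x - q x * g x := by
      funext x; ring
    rw [h]; exact hφg.sub hqg
  have hcore := unimodal_integral_nonpos hg0 hgmono hganti hgint
    (hφmeas.sub hcontq.measurable)
    (fun a b => (by rw [hφdef]; exact ind_intervalIntegrable hSmeas a b :
      IntervalIntegrable φ volume a b).sub (hcontq.intervalIntegrable a b))
    hsubint hRmain hLmain
  have hφρint : Integrable φ ρ := by
    refine (integrable_const (1:ℝ)).mono' hφmeas.aestronglyMeasurable
      (Filter.Eventually.of_forall fun x => ?_)
    rw [Real.norm_eq_abs]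
    rw [hφdef]
    by_cases hx : x ∈ S <;> simp [Set.indicator_apply, hx]
  have hsplitρ : (∫ x, φ x ∂ρ) - (∫ x, q x ∂ρ) ≤ 0 := by
    rw [← integral_sub hφρint hqρint, hρdef,
      withDensity_integral_eq hg0 hgm (fun x => φ x - q x)]
    exact hcore
  have hqρval : (∫ x, q x ∂ρ) = 1/20 := by
    simp only [hqdef]
    have ha2 : Integrable (fun x : ℝ => (1/D)*(x-μ)^2 + (0:ℝ)*(x-μ)) ρ :=
      (hI2int.const_mul (1/D)).add (hIμint.const_mul 0)
    rw [integral_add ha2 (integrable_const (-(n^2)/(4*D))),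
      integral_add (hI2int.const_mul (1/D)) (hIμint.const_mul 0),
      integral_const_mul, integral_const_mul, integral_const, hI2ρ, hIμρ]
    simp only [measureReal_def, measure_univ, ENNReal.toReal_one, smul_eq_mul, one_mul, mul_zero, add_zero]
    rw [hDdef]
    have hD' : (20*σ^2 - 5*n^2) ≠ 0 := by rw [← hDdef]; exact hD.ne'
    field_simp
    ring
  have hφρval : (∫ x, φ x ∂ρ) = (ρ S).toReal := by
    rw [hφdef, integral_indicator_const (1:ℝ) hSmeas, smul_eq_mul, mul_one, measureReal_def]
  have hPS : P {ω | r ≤ |X ω - μ|} = ρ S := by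
    have hpre : {ω | r ≤ |X ω - μ|} = X ⁻¹' S := by
      ext ω
      simp only [Set.mem_setOf_eq, Set.mem_preimage, hSdef, Set.mem_union, Set.mem_Iic,
        Set.mem_Ici]
      constructor
      · intro hle
        rcases le_abs.mp hle with h | h
        · right; linarith
        · left; linarith
      · intro hor
        rcases hor with h | h
        · exact le_abs.mpr (Or.inr (by linarith))
        · exact le_abs.mpr (Or.inl (by linarith))
    rw [hpre, ← hlaw', Measure.map_apply hX hSmeas]
  rw [hPS, ← hφρval]
  linarith [hsplitρ, hqρval]
end

section
/- Let X be a real random variable on a probability space (Ω, P) whose law is absolutely continuous with respect to Lebesgue measure with a density f : ℝ → ℝ that is monotone nondecreasing on (−∞, m] and monotone nonincreasing on [m, ∞) for some mode m ∈ ℝ, and suppose X has mean μ and finite, non-zero variance σ². Then for every real λ > √(8/3), the one-sided tail satisfies P(X − μ ≥ λ·σ) ≤ 4/(9·λ²); in particular P(X − μ ≥ √(40/9)·σ) ≤ 1/10. -/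
open MeasureTheory ProbabilityTheory Real Set
open scoped NNReal ENNReal

lemma vpIntegralQuad (a b c μ u v : ℝ) :
    ∫ t in u..v, (a*(t-μ)^2 + b*(t-μ) + c)
      = (a*(v-μ)^3/3 + b*(v-μ)^2/2 + c*(v-μ)) - (a*(u-μ)^3/3 + b*(u-μ)^2/2 + c*(u-μ)) := by
  have hd : ∀ t ∈ Set.uIcc u v, HasDerivAt (fun t => a*(t-μ)^3/3 + b*(t-μ)^2/2 + c*(t-μ))
      (a*(t-μ)^2 + b*(t-μ) + c) t := by
    intro t _
    have h1 : HasDerivAt (fun t : ℝ => t - μ) 1 t := (hasDerivAt_id t).sub_const μ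
    have h3 : HasDerivAt (fun t : ℝ => (t-μ)^3) (3*(t-μ)^2) t := by
      simpa using h1.fun_pow 3
    have h2 : HasDerivAt (fun t : ℝ => (t-μ)^2) (2*(t-μ)) t := by
      simpa using h1.fun_pow 2
    have hsum := (((h3.const_mul a).div_const 3).add ((h2.const_mul b).div_const 2)).add
      (h1.const_mul c)
    have heq : a*(t-μ)^2 + b*(t-μ) + c = a * (3*(t-μ)^2)/3 + b*(2*(t-μ))/2 + c*1 := by ring
    rw [heq]
    exact hsum
  have hc : Continuous fun t : ℝ => a*(t-μ)^2 + b*(t-μ) + c := by continuity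
  rw [intervalIntegral.integral_eq_sub_of_hasDerivAt hd (hc.intervalIntegrable u v)]

lemma vpIndMono (R : ℝ) : Monotone (Set.indicator (Set.Ici R) (fun _ => (1:ℝ))) := by
  intro x y hxy
  by_cases hx : R ≤ x
  · rw [Set.indicator_of_mem (Set.mem_Ici.2 hx), Set.indicator_of_mem (Set.mem_Ici.2 (hx.trans hxy))]
  · rw [Set.indicator_of_notMem (by simpa using hx)]
    by_cases hy : R ≤ y
    · rw [Set.indicator_of_mem (Set.mem_Ici.2 hy)]; norm_num
    · rw [Set.indicator_of_notMem (by simpa using hy)]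

lemma vpIntegralInd (R u v : ℝ) (huv : u ≤ v) :
    ∫ t in u..v, Set.indicator (Set.Ici R) (fun _ => (1:ℝ)) t
      = max (v - R) 0 - max (u - R) 0 := by
  rw [intervalIntegral.integral_of_le huv, setIntegral_indicator measurableSet_Ici,
    setIntegral_const, smul_eq_mul, mul_one, measureReal_def]
  rcases le_or_gt R u with hR | hR
  · have hset : Set.Ioc u v ∩ Set.Ici R = Set.Ioc u v :=
      Set.inter_eq_left.mpr (fun t ht => le_trans hR ht.1.le)
    rw [hset, Real.volume_Ioc, ENNReal.toReal_ofReal (by linarith)]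
    rw [max_eq_left (by linarith), max_eq_left (by linarith)]
    ring
  · have hset : Set.Ioc u v ∩ Set.Ici R = Set.Icc R v := by
      ext t
      simp only [Set.mem_inter_iff, Set.mem_Ioc, Set.mem_Ici, Set.mem_Icc]
      constructor
      · rintro ⟨⟨_, h2⟩, h3⟩; exact ⟨h3, h2⟩
      · rintro ⟨h1, h2⟩; exact ⟨⟨lt_of_lt_of_le hR h1, h2⟩, h1⟩
    rw [hset, Real.volume_Icc, max_eq_right (show u - R ≤ (0:ℝ) by linarith),
      ENNReal.toReal_ofReal']
    ring

lemma vpCore (f : ℝ → ℝ) (m R : ℝ)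
    (hmono : MonotoneOn f (Set.Iic m)) (hanti : AntitoneOn f (Set.Ici m))
    (hprob : IsProbabilityMeasure (volume.withDensity fun x => ENNReal.ofReal (f x)))
    (q : ℝ → ℝ) (hq : Continuous q)
    (hqi : Integrable q (volume.withDensity fun x => ENNReal.ofReal (f x)))
    (hL : ∀ x ≤ m, 0 ≤ ∫ t in x..m,
        (q t - Set.indicator (Set.Ici R) (fun _ => (1:ℝ)) t))
    (hR : ∀ x, m ≤ x → 0 ≤ ∫ t in m..x,
        (q t - Set.indicator (Set.Ici R) (fun _ => (1:ℝ)) t)) :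
    ((volume.withDensity fun x => ENNReal.ofReal (f x)) (Set.Ici R)).toReal
      ≤ ∫ x, q x ∂(volume.withDensity fun x => ENNReal.ofReal (f x)) := by
  set ρ : Measure ℝ := volume.withDensity fun x => ENNReal.ofReal (f x) with hρdef
  set w : ℝ → ℝ≥0 := fun x => Real.toNNReal (f x) with hwdef
  have hρw : ρ = volume.withDensity fun x => ((w x : ℝ≥0) : ℝ≥0∞) := rfl
  set ind : ℝ → ℝ := Set.indicator (Set.Ici R) (fun _ => (1:ℝ)) with hinddef
  have hind_meas : Measurable ind := measurable_const.indicator measurableSet_Ici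
  have hind_int : Integrable ind ρ := (integrable_const (1:ℝ)).indicator measurableSet_Ici
  -- superlevel sets of w are order-connected
  have hlevel : ∀ s : ℝ, Set.OrdConnected {y : ℝ | s < (w y : ℝ)} := by
    intro s
    constructor
    intro y1 h1 y2 h2 y hy
    simp only [Set.mem_setOf_eq] at h1 h2 ⊢
    have hcoe : ∀ z : ℝ, ((w z : ℝ)) = max (f z) 0 := fun z => Real.coe_toNNReal' (f z)
    rcases le_total y m with hym | hmy
    · have hy1m : y1 ∈ Set.Iic m := Set.mem_Iic.2 (le_trans hy.1 hym)
      have : f y1 ≤ f y := hmono hy1m (Set.mem_Iic.2 hym) hy.1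
      rw [hcoe] at h1 ⊢
      exact lt_of_lt_of_le h1 (max_le_max this le_rfl)
    · have hy2m : y2 ∈ Set.Ici m := Set.mem_Ici.2 (le_trans hmy hy.2)
      have : f y ≥ f y2 := hanti (Set.mem_Ici.2 hmy) hy2m hy.2
      rw [hcoe] at h2 ⊢
      exact lt_of_lt_of_le h2 (max_le_max this le_rfl)
  have hw_meas : Measurable w := by
    apply measurable_of_Ioi
    intro t
    have : w ⁻¹' (Set.Ioi t) = {y : ℝ | (t : ℝ) < (w y : ℝ)} := by
      ext y
      simp [Set.mem_preimage, Set.mem_Ioi, NNReal.coe_lt_coe]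
    rw [this]
    exact (hlevel (t:ℝ)).measurableSet
  set h : ℝ → ℝ := fun x => q x - ind x with hhdef
  have hh_meas : Measurable h := hq.measurable.sub hind_meas
  have hqi' : Integrable h ρ := hqi.sub hind_int
  have hh_ii : ∀ u v : ℝ, IntervalIntegrable h volume u v := fun u v =>
    (hq.intervalIntegrable u v).sub ((vpIndMono R).intervalIntegrable)
  -- main positivity
  have key : 0 ≤ ∫ x, h x ∂ρ := by
    rw [hρw, integral_withDensity_eq_integral_smul hw_meas]
    have hint_smul : Integrable (fun x => w x • h x) volume := by
      rw [← integrable_withDensity_iff_integrable_smul hw_meas]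
      exact hqi'
    set H : ℝ × ℝ → ℝ :=
      fun p => Set.indicator (Set.Ioo (0:ℝ) (w p.1 : ℝ)) (fun _ => h p.1) p.2 with hHdef
    have hS_meas : MeasurableSet {p : ℝ × ℝ | p.2 ∈ Set.Ioo (0:ℝ) ((w p.1 : ℝ))} := by
      apply MeasurableSet.inter
      · exact measurable_snd measurableSet_Ioi
      · exact measurableSet_lt measurable_snd
          ((NNReal.continuous_coe.measurable.comp hw_meas).comp measurable_fst)
    have hH_eq : H = Set.indicator {p : ℝ × ℝ | p.2 ∈ Set.Ioo (0:ℝ) ((w p.1 : ℝ))}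
        (fun p => h p.1) := by
      ext p
      by_cases hp : p.2 ∈ Set.Ioo (0:ℝ) ((w p.1 : ℝ))
      · rw [hHdef]; simp only [Set.indicator_of_mem hp]
        rw [Set.indicator_of_mem]; exact hp
      · rw [hHdef]; simp only [Set.indicator_of_notMem hp]
        rw [Set.indicator_of_notMem]; exact hp
    have hH_meas : Measurable H := by
      rw [hH_eq]; exact (hh_meas.comp measurable_fst).indicator hS_meas
    have inner : ∀ y : ℝ, (∫ s, H (y, s)) = w y • h y := by
      intro y
      have hfun : (fun s => H (y, s)) = Set.indicator (Set.Ioo (0:ℝ) ((w y : ℝ)))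
          (fun _ => h y) := rfl
      rw [hfun, integral_indicator measurableSet_Ioo, setIntegral_const, measureReal_def, Real.volume_Ioo,
        sub_zero, smul_eq_mul]
      rw [ENNReal.toReal_ofReal (w y).coe_nonneg, NNReal.smul_def, smul_eq_mul]
    have inner_abs : ∀ y : ℝ, (∫ s, ‖H (y, s)‖) = w y • ‖h y‖ := by
      intro y
      have hfun : (fun s => ‖H (y, s)‖) = Set.indicator (Set.Ioo (0:ℝ) ((w y : ℝ)))
          (fun _ => ‖h y‖) := by
        ext s
        by_cases hp : s ∈ Set.Ioo (0:ℝ) ((w y : ℝ))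
        · rw [hHdef]; simp only [Set.indicator_of_mem hp]
        · rw [hHdef]; simp only [Set.indicator_of_notMem hp, norm_zero]
      rw [hfun, integral_indicator measurableSet_Ioo, setIntegral_const, measureReal_def, Real.volume_Ioo,
        sub_zero, smul_eq_mul]
      rw [ENNReal.toReal_ofReal (w y).coe_nonneg, NNReal.smul_def, smul_eq_mul]
    have habs : Integrable (Function.uncurry fun y s => H (y, s)) (volume.prod volume) := by
      have huncurry : (Function.uncurry fun y s => H (y, s)) = H := rfl
      rw [huncurry, integrable_prod_iff hH_meas.aestronglyMeasurable]
      constructor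
      · refine Filter.Eventually.of_forall (fun y => ?_)
        have hfun : (fun s => H (y, s)) = Set.indicator (Set.Ioo (0:ℝ) ((w y : ℝ)))
            (fun _ => h y) := rfl
        rw [hfun]
        exact (integrableOn_const (hs := measure_Ioo_lt_top.ne)).integrable_indicator
          measurableSet_Ioo
      · have : (fun y => ∫ s, ‖H (y, s)‖) = fun y => w y • ‖h y‖ := by
          ext y; exact inner_abs y
        rw [this]
        have := hint_smul.norm
        refine this.congr (Filter.Eventually.of_forall fun y => ?_)
        simp [NNReal.smul_def, Real.norm_eq_abs, abs_mul, abs_of_nonneg (w y).coe_nonneg]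
      -- note : smul with NNReal
    have swap := integral_integral_swap habs
    have inner_nonneg : ∀ s : ℝ, 0 ≤ ∫ y, H (y, s) := by
      intro s
      rcases le_or_gt s 0 with hs | hs
      · have : (fun y => H (y, s)) = fun _ => 0 := by
          ext y
          rw [hHdef]
          apply Set.indicator_of_notMem
          intro hmem
          exact absurd hmem.1 (not_lt.2 hs)
        rw [this, integral_zero]
      · set E : Set ℝ := {y : ℝ | s < (w y : ℝ)} with hEdef
        have hEmeas : MeasurableSet E := (hlevel s).measurableSet
        have hfun : (fun y => H (y, s)) = E.indicator h := by
          ext y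
          by_cases hy : y ∈ E
          · rw [hHdef, Set.indicator_of_mem hy]
            exact Set.indicator_of_mem (Set.mem_Ioo.2 ⟨hs, hy⟩) _
          · rw [hHdef, Set.indicator_of_notMem hy]
            refine Set.indicator_of_notMem (fun hmem => hy hmem.2) _
        rw [hfun, integral_indicator hEmeas]
        rcases Set.eq_empty_or_nonempty E with hEe | ⟨y0, hy0⟩
        · rw [hEe]; simp
        · -- m ∈ E
          have hcoe : ∀ z : ℝ, ((w z : ℝ)) = max (f z) 0 := fun z => Real.coe_toNNReal' (f z)
          have hmE : m ∈ E := by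
            rcases le_total y0 m with hym | hmy
            · have : f y0 ≤ f m := hmono (Set.mem_Iic.2 hym) (Set.mem_Iic.2 le_rfl) hym
              simp only [hEdef, Set.mem_setOf_eq, hcoe] at hy0 ⊢
              exact lt_of_lt_of_le hy0 (max_le_max this le_rfl)
            · have : f y0 ≤ f m := hanti (Set.mem_Ici.2 le_rfl) (Set.mem_Ici.2 hmy) hmy
              simp only [hEdef, Set.mem_setOf_eq, hcoe] at hy0 ⊢
              exact lt_of_lt_of_le hy0 (max_le_max this le_rfl)
          -- E has finite measure
          have hEfin : volume E ≠ ⊤ := by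
            intro htop
            have hle : ∀ y ∈ E, ENNReal.ofReal s ≤ ENNReal.ofReal (f y) := by
              intro y hy
              apply ENNReal.ofReal_le_ofReal
              have := hy
              simp only [hEdef, Set.mem_setOf_eq, hcoe] at this
              rcases le_or_gt (f y) 0 with h0 | h0
              · rw [max_eq_right h0] at this; exact absurd this (not_lt.2 hs.le)
              · rw [max_eq_left h0.le] at this; exact this.le
            have h1 : ∫⁻ y in E, ENNReal.ofReal s ∂volume
                ≤ ∫⁻ y in E, ENNReal.ofReal (f y) ∂volume :=
              setLIntegral_mono' hEmeas hle
            have h2 : ∫⁻ y in E, ENNReal.ofReal (f y) ∂volume = ρ E :=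
              (withDensity_apply _ hEmeas).symm
            have h3 : ρ E ≤ 1 := prob_le_one
            rw [setLIntegral_const, htop, ENNReal.mul_top
              (by simpa using (ENNReal.ofReal_pos.2 hs).ne')] at h1
            rw [h2] at h1
            exact absurd (le_trans h1 h3) (by simp)
          have hIccsub : ∀ y1 ∈ E, ∀ y2 ∈ E, Set.Icc y1 y2 ⊆ E := fun y1 h1 y2 h2 =>
            (hlevel s).out h1 h2
          have hbddA : BddAbove E := by
            by_contra hub
            rw [not_bddAbove_iff] at hub
            obtain ⟨y, hyE, hy⟩ := hub ((volume E).toReal + m + 1)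
            have hsub : Set.Icc m y ⊆ E := hIccsub m hmE y hyE
            have hv := measure_mono (μ := volume) hsub
            rw [Real.volume_Icc] at hv
            have h4 := ENNReal.toReal_mono hEfin hv
            rw [ENNReal.toReal_ofReal (by linarith [(ENNReal.toReal_nonneg :
              0 ≤ (volume E).toReal)])] at h4
            linarith
          have hbddB : BddBelow E := by
            by_contra hub
            rw [not_bddBelow_iff] at hub
            obtain ⟨y, hyE, hy⟩ := hub (m - (volume E).toReal - 1)
            have hsub : Set.Icc y m ⊆ E := hIccsub y hyE m hmE
            have hv := measure_mono (μ := volume) hsub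
            rw [Real.volume_Icc] at hv
            have h4 := ENNReal.toReal_mono hEfin hv
            rw [ENNReal.toReal_ofReal (by linarith [(ENNReal.toReal_nonneg :
              0 ≤ (volume E).toReal)])] at h4
            linarith
          set A := sInf E with hAdef
          set B := sSup E with hBdef
          have hAm : A ≤ m := csInf_le hbddB hmE
          have hmB : m ≤ B := le_csSup hbddA hmE
          have hIooE : Set.Ioo A B ⊆ E := by
            intro y hy
            obtain ⟨e1, he1E, he1⟩ := exists_lt_of_csInf_lt ⟨y0, hy0⟩ hy.1
            obtain ⟨e2, he2E, he2⟩ := exists_lt_of_lt_csSup ⟨y0, hy0⟩ hy.2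
            exact hIccsub e1 he1E e2 he2E ⟨he1.le, he2.le⟩
          have hEIcc : E ⊆ Set.Icc A B := fun y hy => ⟨csInf_le hbddB hy, le_csSup hbddA hy⟩
          have hEae : E =ᵐ[volume] Set.Ioc A B := by
            rw [MeasureTheory.ae_eq_set]
            constructor
            · refine measure_mono_null ?_ (Real.volume_singleton (a := A))
              intro y hy
              rcases hy with ⟨hyE, hyI⟩
              have h1 := hEIcc hyE
              have h2 : ¬ A < y := fun hlt => hyI ⟨hlt, h1.2⟩
              exact Set.mem_singleton_iff.2 (le_antisymm (not_lt.1 h2) h1.1)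
            · refine measure_mono_null ?_ (Real.volume_singleton (a := B))
              intro y hy
              rcases hy with ⟨hyI, hyE⟩
              have h2 : ¬ y < B := fun hlt => hyE (hIooE ⟨hyI.1, hlt⟩)
              exact Set.mem_singleton_iff.2 (le_antisymm hyI.2 (not_lt.1 h2))
          calc (0:ℝ) ≤ (∫ t in A..m, h t) + ∫ t in m..B, h t :=
                add_nonneg (hL A hAm) (hR B hmB)
            _ = ∫ t in A..B, h t :=
                intervalIntegral.integral_add_adjacent_intervals (hh_ii A m) (hh_ii m B)
            _ = ∫ t in Set.Ioc A B, h t := intervalIntegral.integral_of_le (hAm.trans hmB)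
            _ = ∫ t in E, h t := (setIntegral_congr_set hEae).symm
    calc (0:ℝ) ≤ ∫ s, ∫ y, H (y, s) := integral_nonneg inner_nonneg
      _ = ∫ y, ∫ s, H (y, s) := (integral_integral_swap habs).symm
      _ = ∫ y, w y • h y := by
          congr 1; ext y; exact inner y
  -- conclude
  have htail : (ρ (Set.Ici R)).toReal = ∫ x, ind x ∂ρ := by
    rw [hinddef, integral_indicator measurableSet_Ici, setIntegral_const, smul_eq_mul, mul_one, measureReal_def]
  have hsub : ∫ x, h x ∂ρ = (∫ x, q x ∂ρ) - ∫ x, ind x ∂ρ := integral_sub hqi hind_int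
  rw [hsub] at key
  linarith [key, htail.ge, htail.le]
lemma vpReg1Key (ν r y Z : ℝ) (hν0 : 0 ≤ ν) (hZ0 : 0 < Z) (hyν : ν ≤ y)
    (hZ2 : 2*Z^2 - (3*r+5*ν)*Z + 4*ν*(r+ν) = 0) :
    (y-r)*(Z*(3*Z-4*ν)) ≤ (y-ν)*(y+ν)^2 := by
  have hiden : (y-ν)*(y+ν)^2 - (y-r)*(Z*(3*Z-4*ν))
      = ((y+ν)-Z)^2*(((y+ν)+2*Z)-2*ν) := by linear_combination (-Z)*hZ2
  have h2 : 0 ≤ ((y+ν)-Z)^2*(((y+ν)+2*Z)-2*ν) :=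
    mul_nonneg (sq_nonneg _) (by linarith)
  linarith [hiden, h2]

lemma vpReg1Star (ν r s : ℝ) (hν0 : 0 ≤ ν) (hνr : ν ≤ r) (hr0 : 0 < r) (hs0 : 0 ≤ s)
    (hs2 : s^2 = (9*r+7*ν)*(r-ν)) :
    27*r^2 - 18*ν*r - 35*ν^2 ≤ (9*r+7*ν)*s := by
  rcases le_or_gt (27*r^2 - 18*ν*r - 35*ν^2) 0 with hT | hT
  · exact le_trans hT (mul_nonneg (by linarith) hs0)
  · have h97 : (0:ℝ) ≤ 9*r+7*ν := by linarith
    have hsq : ((9*r+7*ν)*s)^2 = (9*r+7*ν)^2*((9*r+7*ν)*(r-ν)) := by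
      rw [mul_pow, hs2]
    have hident : (9*r+7*ν)^2*((9*r+7*ν)*(r-ν)) - (27*r^2 - 18*ν*r - 35*ν^2)^2
        = ν*(72*r*(27*r^2 - 18*ν*r - 35*ν^2) + 2484*ν*r^2 + 280*ν^2*r - 1568*ν^3) := by
      ring
    have h1 : 0 ≤ ν*(r-ν)*(r+ν) :=
      mul_nonneg (mul_nonneg hν0 (by linarith)) (by linarith)
    have h2 : 0 ≤ ν^2*(r-ν) := mul_nonneg (sq_nonneg ν) (by linarith)
    have hpos : 0 ≤ ν*(72*r*(27*r^2 - 18*ν*r - 35*ν^2) + 2484*ν*r^2 + 280*ν^2*r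
        - 1568*ν^3) := by
      apply mul_nonneg hν0
      nlinarith [mul_nonneg hr0.le hT.le, h1, h2, mul_nonneg hν0 (mul_nonneg hν0 hν0)]
    have hTsq : (27*r^2 - 18*ν*r - 35*ν^2)^2 ≤ ((9*r+7*ν)*s)^2 := by
      rw [hsq]; linarith [hident, hpos]
    exact le_of_pow_le_pow_left₀ two_ne_zero (mul_nonneg h97 hs0) hTsq

lemma vpReg1Val (ν r σ s Z : ℝ) (hν0 : 0 ≤ ν) (hνr : ν ≤ r) (hr0 : 0 < r) (hs0 : 0 ≤ s)
    (hs2 : s^2 = (9*r+7*ν)*(r-ν)) (hZdef : Z = (3*r+5*ν+s)/4) (hrr : 8*σ^2 < 3*r^2) :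
    (3*σ^2 - ν^2)*(9*r^2) ≤ 4*σ^2*(Z*(3*Z-4*ν)) := by
  have hstar := vpReg1Star ν r s hν0 hνr hr0 hs0 hs2
  have hKval : 8*(Z*(3*Z-4*ν)) = (9*r+7*ν)*(3*r+5*ν+s) - 48*ν*(r+ν) := by
    rw [hZdef]; linear_combination (3/2)*hs2
  have hf1 : σ^2*(27*r^2 - 18*ν*r - 35*ν^2) ≤ σ^2*((9*r+7*ν)*s) :=
    mul_le_mul_of_nonneg_left hstar (sq_nonneg σ)
  nlinarith [hf1, hKval, mul_nonneg (sq_nonneg ν) (show (0:ℝ) ≤ 3*r^2 - 8*σ^2 by linarith)]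

lemma vpReg2Cube (Rp u v : ℝ) (hRp : 0 < Rp) (hu : Rp ≤ u) (huv : u ≤ v) :
    3*Rp^2*(v - u) ≤ v^3 - u^3 := by
  have hv : Rp ≤ v := hu.trans huv
  have q1 : Rp*Rp ≤ u*u := mul_self_le_mul_self hRp.le hu
  have q2 : Rp*Rp ≤ v*v := mul_self_le_mul_self hRp.le hv
  have q3 : Rp*Rp ≤ u*v := mul_le_mul hu hv hRp.le (by linarith)
  nlinarith [mul_nonneg (sub_nonneg.2 huv)
    (show (0:ℝ) ≤ v^2 + v*u + u^2 - 3*Rp^2 by nlinarith [q1, q2, q3])]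

lemma vpReg2One (r hh Rp aa u v : ℝ) (hr0 : 0 < r) (hh0 : 0 < hh)
    (hRpdef : Rp = r + hh) (haadef : aa = 4/(3*Rp^2)) (hu : r ≤ u) (huv : u ≤ v) :
    v - u ≤ (aa*v^3/3 + 2*hh*aa*v^2/2 + (aa*hh^2-1/3)*v)
         - (aa*u^3/3 + 2*hh*aa*u^2/2 + (aa*hh^2-1/3)*u) := by
  have hRp0 : 0 < Rp := by rw [hRpdef]; linarith
  have hcub := vpReg2Cube Rp (u+hh) (v+hh) hRp0 (by rw [hRpdef]; linarith) (by linarith)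
  have hRpne : Rp ≠ 0 := ne_of_gt hRp0
  have hexp : (aa*v^3/3 + 2*hh*aa*v^2/2 + (aa*hh^2-1/3)*v)
         - (aa*u^3/3 + 2*hh*aa*u^2/2 + (aa*hh^2-1/3)*u) - (v - u)
      = 4*((v+hh)^3 - (u+hh)^3 - 3*Rp^2*((v+hh)-(u+hh)))/(9*Rp^2) := by
    rw [haadef]
    field_simp
    ring
  have h9Rp : (0:ℝ) < 9*Rp^2 := by positivity
  have hnn : 0 ≤ 4*((v+hh)^3 - (u+hh)^3 - 3*Rp^2*((v+hh)-(u+hh)))/(9*Rp^2) :=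
    div_nonneg (by linarith) h9Rp.le
  linarith [hexp, hnn]

lemma vpReg2Zero (r hh Rp aa u : ℝ) (hr0 : 0 < r) (hh0 : 0 < hh)
    (hRpdef : Rp = r + hh) (haadef : aa = 4/(3*Rp^2)) (hu : u ≤ r) :
    0 ≤ (aa*r^3/3 + 2*hh*aa*r^2/2 + (aa*hh^2-1/3)*r)
         - (aa*u^3/3 + 2*hh*aa*u^2/2 + (aa*hh^2-1/3)*u) := by
  have hRp0 : 0 < Rp := by rw [hRpdef]; linarith
  have hRpne : Rp ≠ 0 := ne_of_gt hRp0
  have h9Rp : (0:ℝ) < 9*Rp^2 := by positivity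
  have hexp : (aa*r^3/3 + 2*hh*aa*r^2/2 + (aa*hh^2-1/3)*r)
         - (aa*u^3/3 + 2*hh*aa*u^2/2 + (aa*hh^2-1/3)*u)
      = (Rp-(u+hh))*(Rp+2*(u+hh))^2/(9*Rp^2) := by
    rw [haadef, hRpdef]
    have hrh : r + hh ≠ 0 := by positivity
    field_simp
    ring
  rw [hexp]
  exact div_nonneg (mul_nonneg (by rw [hRpdef]; linarith) (sq_nonneg _)) h9Rp.le

lemma vpReg2Val (r σ hh Rp aa : ℝ) (hσpos : 0 < σ) (hr0 : 0 < r)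
    (hhdef : hh = σ^2/r) (hRpdef : Rp = r + hh) (haadef : aa = 4/(3*Rp^2)) :
    aa*σ^2 + (aa*hh^2-1/3) ≤ 4*σ^2/(9*r^2) := by
  have hrne : r ≠ 0 := ne_of_gt hr0
  have hden : r^2 + σ^2 ≠ 0 := by positivity
  have hL2 : aa*σ^2 + (aa*hh^2-1/3) = (3*σ^2 - r^2)/(3*(r^2+σ^2)) := by
    rw [haadef, hRpdef, hhdef]
    field_simp
    ring
  rw [hL2, div_le_div_iff₀ (by positivity) (by positivity)]
  nlinarith [sq_nonneg (4*σ^2 - 5/2*r^2), sq_nonneg (r^2), sq_nonneg (σ*r)]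
set_option maxHeartbeats 1000000 in
/-- One-sided Vysochanskij–Petunin inequality: for a unimodal random variable `X` with mean `μ`
and finite non-zero variance `σ²`, for every `λ > √(8/3)` one has
`P(X - μ ≥ λσ) ≤ 4/(9λ²)`; in particular `P(X - μ ≥ √(40/9)·σ) ≤ 1/10`. -/
theorem vysochanskij_petunin_one_sided
    {Ω : Type*} [MeasurableSpace Ω] (P : Measure Ω) [IsProbabilityMeasure P]
    (X : Ω → ℝ) (hX : Measurable X)
    (f : ℝ → ℝ) (m : ℝ)
    (hlaw : Measure.map X P = volume.withDensity (fun x => ENNReal.ofReal (f x)))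
    (hmono : MonotoneOn f (Set.Iic m)) (hanti : AntitoneOn f (Set.Ici m))
    (μ σ : ℝ) (hμ : μ = ∫ ω, X ω ∂P)
    (hfin : MemLp X 2 P)
    (hσ : σ ^ 2 = ∫ ω, (X ω - μ) ^ 2 ∂P) (hσpos : 0 < σ) :
    (∀ lam : ℝ, Real.sqrt (8 / 3) < lam →
        (P {ω | lam * σ ≤ X ω - μ}).toReal ≤ 4 / (9 * lam ^ 2)) ∧
      (P {ω | Real.sqrt (40 / 9) * σ ≤ X ω - μ}).toReal ≤ 1 / 10 := by
  have hprob' : IsProbabilityMeasure (volume.withDensity fun x => ENNReal.ofReal (f x)) := by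
    rw [← hlaw]; exact Measure.isProbabilityMeasure_map hX.aemeasurable
  have hXint : Integrable X P := hfin.integrable one_le_two
  have hYint : Integrable (fun ω => X ω - μ) P := hXint.sub (integrable_const μ)
  have hYmem : MemLp (fun ω => X ω - μ) 2 P := hfin.sub (memLp_const μ)
  have hYsq_int : Integrable (fun ω => (X ω - μ)^2) P := hYmem.integrable_sq
  have hEY : ∫ ω, (X ω - μ) ∂P = 0 := by
    rw [integral_sub hXint (integrable_const μ), integral_const, probReal_univ,
      one_smul, ← hμ, sub_self]
  have main : ∀ lam : ℝ, Real.sqrt (8 / 3) < lam →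
      (P {ω | lam * σ ≤ X ω - μ}).toReal ≤ 4 / (9 * lam ^ 2) := by
    intro lam hlam
    have hlam0 : 0 < lam := lt_of_le_of_lt (Real.sqrt_nonneg _) hlam
    have hlam2 : 8/3 < lam^2 := by
      nlinarith [Real.sq_sqrt (show (0:ℝ) ≤ 8/3 by norm_num), Real.sqrt_nonneg (8/3 : ℝ)]
    set r : ℝ := lam * σ with hrdef
    have hr0 : 0 < r := mul_pos hlam0 hσpos
    have hr2 : r^2 = lam^2 * σ^2 := by rw [hrdef]; ring
    have hrr : 8 * σ^2 < 3 * r^2 := by nlinarith [pow_pos hσpos 2]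
    set R : ℝ := μ + r with hRdef
    set ν : ℝ := m - μ with hνdef
    have hmν : m = μ + ν := by rw [hνdef]; ring
    have hbound : 4 / (9 * lam^2) = 4*σ^2/(9*r^2) := by
      rw [hr2]; field_simp
    have reduction : ∀ a b c : ℝ,
        (∀ x, x ≤ m → max (m-R) 0 - max (x-R) 0 ≤
          (a*(m-μ)^3/3 + b*(m-μ)^2/2 + c*(m-μ)) - (a*(x-μ)^3/3 + b*(x-μ)^2/2 + c*(x-μ))) →
        (∀ x, m ≤ x → max (x-R) 0 - max (m-R) 0 ≤
          (a*(x-μ)^3/3 + b*(x-μ)^2/2 + c*(x-μ)) - (a*(m-μ)^3/3 + b*(m-μ)^2/2 + c*(m-μ))) →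
        a * σ^2 + c ≤ 4/(9*lam^2) →
        (P {ω | lam * σ ≤ X ω - μ}).toReal ≤ 4 / (9 * lam ^ 2) := by
      intro a b c hA hB hval
      set q : ℝ → ℝ := fun x => a*(x-μ)^2 + b*(x-μ) + c with hqdef
      have hqc : Continuous q := by
        have c1 : Continuous fun x : ℝ => x - μ := continuous_id.sub continuous_const
        exact ((continuous_const.mul (c1.pow 2)).add (continuous_const.mul c1)).add
          continuous_const
      have hqiP : Integrable (fun ω => q (X ω)) P := by
        have hfe : (fun ω => q (X ω)) = fun ω => a*(X ω - μ)^2 + b*(X ω - μ) + c := rfl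
        rw [hfe]
        exact ((hYsq_int.const_mul a).add (hYint.const_mul b)).add (integrable_const c)
      have hqi : Integrable q (volume.withDensity fun x => ENNReal.ofReal (f x)) := by
        rw [← hlaw]
        exact (integrable_map_measure hqc.aestronglyMeasurable hX.aemeasurable).2 hqiP
      have hint_eq : ∫ x, q x ∂(volume.withDensity fun x => ENNReal.ofReal (f x))
          = a * σ^2 + c := by
        rw [← hlaw, integral_map hX.aemeasurable hqc.aestronglyMeasurable]
        have hfe : (fun ω => q (X ω)) = fun ω => a*(X ω - μ)^2 + b*(X ω - μ) + c := rfl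
        have hfe2 : (fun ω => q (X ω)) = fun ω => a*(X ω - μ)^2 + (b*(X ω - μ) + c) := by
          funext ω; simp only [hqdef]; ring
        have hbc : Integrable (fun ω => b*(X ω - μ) + c) P :=
          (hYint.const_mul b).add (integrable_const c)
        rw [hfe2, integral_add (hYsq_int.const_mul a) hbc,
          integral_add (hYint.const_mul b) (integrable_const c),
          integral_const_mul, integral_const_mul, hEY, ← hσ, integral_const,
          probReal_univ, one_smul]
        ring
      have htail : P {ω | lam * σ ≤ X ω - μ}
          = (volume.withDensity fun x => ENNReal.ofReal (f x)) (Set.Ici R) := by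
        rw [← hlaw, Measure.map_apply hX measurableSet_Ici]
        congr 1
        ext ω
        simp only [Set.mem_setOf_eq, Set.mem_preimage, Set.mem_Ici, hRdef]
        constructor <;> intro hh <;> [linarith; linarith]
      have hLc : ∀ x, x ≤ m → 0 ≤ ∫ t in x..m,
          (q t - Set.indicator (Set.Ici R) (fun _ => (1:ℝ)) t) := by
        intro x hx
        rw [intervalIntegral.integral_sub (hqc.intervalIntegrable x m)
          ((vpIndMono R).intervalIntegrable), hqdef, vpIntegralQuad, vpIntegralInd R x m hx]
        linarith [hA x hx]
      have hRc : ∀ x, m ≤ x → 0 ≤ ∫ t in m..x,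
          (q t - Set.indicator (Set.Ici R) (fun _ => (1:ℝ)) t) := by
        intro x hx
        rw [intervalIntegral.integral_sub (hqc.intervalIntegrable m x)
          ((vpIndMono R).intervalIntegrable), hqdef, vpIntegralQuad, vpIntegralInd R m x hx]
        linarith [hB x hx]
      have hcore := vpCore f m R hmono hanti hprob' q hqc hqi hLc hRc
      rw [hint_eq] at hcore
      rw [htail]
      exact le_trans hcore hval
    rcases le_or_gt ν 0 with hν0 | hν0
    · -- regime 0 : mode left of mean
      apply reduction (4/(9*r^2)) 0 0
      · intro x hx
        rw [← hνdef]
        rw [max_eq_right (show m - R ≤ 0 by rw [hmν, hRdef]; linarith),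
          max_eq_right (show x - R ≤ 0 by rw [hRdef] at *; rw [hmν] at hx; linarith)]
        have hyν : x - μ ≤ ν := by rw [hνdef]; linarith
        have key : 0 ≤ ν^2 + ν*(x-μ) + (x-μ)^2 := by
          nlinarith [sq_nonneg (ν+(x-μ)), sq_nonneg ν, sq_nonneg (x-μ)]
        have key2 : (x-μ)^3 ≤ ν^3 := by
          nlinarith [mul_nonneg (sub_nonneg.2 hyν) key]
        have hd : (0:ℝ) ≤ 4/(9*r^2) := by positivity
        nlinarith [mul_nonneg hd (sub_nonneg.2 key2)]
      · intro x hx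
        rw [← hνdef]
        rw [max_eq_right (show m - R ≤ 0 by rw [hmν, hRdef]; linarith)]
        have hyν : ν ≤ x - μ := by rw [hνdef]; linarith
        rcases le_or_gt x R with hxR | hxR
        · rw [max_eq_right (by linarith : x - R ≤ 0)]
          have key : 0 ≤ ν^2 + ν*(x-μ) + (x-μ)^2 := by
            nlinarith [sq_nonneg (ν+(x-μ)), sq_nonneg ν, sq_nonneg (x-μ)]
          have key2 : ν^3 ≤ (x-μ)^3 := by
            nlinarith [mul_nonneg (sub_nonneg.2 hyν) key]
          have hd : (0:ℝ) ≤ 4/(9*r^2) := by positivity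
          nlinarith [mul_nonneg hd (sub_nonneg.2 key2)]
        · rw [max_eq_left (by linarith : (0:ℝ) ≤ x - R)]
          have hx2 : x - R = (x - μ) - r := by rw [hRdef]; ring
          have hy3 : r < x - μ := by rw [hRdef] at hxR; linarith
          have hcube : 27*r^2*((x-μ) - r) ≤ 4*((x-μ)^3 - ν^3) := by
            nlinarith [mul_nonneg (sq_nonneg (2*(x-μ)-3*r))
                (show (0:ℝ) ≤ (x-μ)+3*r by linarith),
              mul_nonneg (neg_nonneg.2 hν0) (sq_nonneg ν)]
          have h27 : (0:ℝ) < 27*r^2 := by positivity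
          rw [show 4/(9*r^2)*(x-μ)^3/3 + 0*(x-μ)^2/2 + 0*(x-μ)
                - (4/(9*r^2)*ν^3/3 + 0*ν^2/2 + 0*ν)
              = 4*((x-μ)^3 - ν^3)/(27*r^2) from by field_simp; ring]
          rw [hx2, sub_zero, le_div_iff₀ h27]
          nlinarith [hcube]
      · rw [hbound]
        rw [show 4/(9*r^2)*σ^2 + 0 = 4*σ^2/(9*r^2) from by ring]
    rcases le_or_gt ν r with hνr | hνr
    · -- regime 1 : 0 < ν ≤ r
      have hDnn : 0 ≤ (9*r+7*ν)*(r-ν) := mul_nonneg (by linarith) (by linarith)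
      set s : ℝ := Real.sqrt ((9*r+7*ν)*(r-ν)) with hsdef
      have hs0 : 0 ≤ s := Real.sqrt_nonneg _
      have hs2 : s^2 = (9*r+7*ν)*(r-ν) := Real.sq_sqrt hDnn
      set Z : ℝ := (3*r+5*ν+s)/4 with hZdef
      have hZ0 : 0 < Z := by rw [hZdef]; linarith
      have h3Z : 0 < 3*Z - 4*ν := by rw [hZdef]; linarith
      set K : ℝ := Z*(3*Z-4*ν) with hKdef
      have hK0 : 0 < K := mul_pos hZ0 h3Z
      have hZ2 : 2*Z^2 - (3*r+5*ν)*Z + 4*ν*(r+ν) = 0 := by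
        rw [hZdef]; linear_combination hs2/8
      apply reduction (3/K) (2*ν/K) (-ν^2/K)
      · intro x hx
        rw [← hνdef,
          max_eq_right (show m - R ≤ 0 by rw [hmν, hRdef]; linarith),
          max_eq_right (show x - R ≤ 0 by rw [hRdef]; rw [hmν] at hx; linarith)]
        have hfold : (3/K*ν^3/3 + 2*ν/K*ν^2/2 + -ν^2/K*ν)
            - (3/K*(x-μ)^3/3 + 2*ν/K*(x-μ)^2/2 + -ν^2/K*(x-μ))
            = (ν-(x-μ))*(ν+(x-μ))^2/K := by
          field_simp
          ring
        have hyν : x - μ ≤ ν := by rw [hνdef]; linarith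
        have hpos : 0 ≤ (ν-(x-μ))*(ν+(x-μ))^2/K :=
          div_nonneg (mul_nonneg (by linarith) (sq_nonneg _)) hK0.le
        linarith [hfold, hpos]
      · intro x hx
        rw [← hνdef,
          max_eq_right (show m - R ≤ 0 by rw [hmν, hRdef]; linarith)]
        have hyν : ν ≤ x - μ := by rw [hνdef]; linarith
        have hfold : (3/K*(x-μ)^3/3 + 2*ν/K*(x-μ)^2/2 + -ν^2/K*(x-μ))
            - (3/K*ν^3/3 + 2*ν/K*ν^2/2 + -ν^2/K*ν)
            = ((x-μ)-ν)*((x-μ)+ν)^2/K := by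
          field_simp
          ring
        rcases le_or_gt x R with hxR | hxR
        · rw [max_eq_right (by linarith : x - R ≤ 0)]
          have hpos : 0 ≤ ((x-μ)-ν)*((x-μ)+ν)^2/K :=
            div_nonneg (mul_nonneg (by linarith) (sq_nonneg _)) hK0.le
          linarith [hfold, hpos]
        · rw [max_eq_left (by linarith : (0:ℝ) ≤ x - R)]
          have hkey := vpReg1Key ν r (x-μ) Z hν0.le hZ0 hyν hZ2
          rw [hfold, show x - R = (x-μ) - r from by rw [hRdef]; ring, sub_zero,
            le_div_iff₀ hK0, hKdef]
          linarith [hkey]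
      · rw [hbound]
        have hval := vpReg1Val ν r σ s Z hν0.le hνr hr0 hs0 hs2 hZdef hrr
        have hfold : 3/K*σ^2 + -ν^2/K = (3*σ^2 - ν^2)/K := by field_simp; ring
        rw [hfold, div_le_div_iff₀ hK0 (by positivity), hKdef]
        linarith [hval]
    · -- regime 2 : r < ν
      have hh0 : 0 < σ^2/r := div_pos (pow_pos hσpos 2) hr0
      set hh : ℝ := σ^2/r with hhdef
      set Rp : ℝ := r + hh with hRpdef
      set aa : ℝ := 4/(3*Rp^2) with haadef
      have hone : ∀ u v : ℝ, r ≤ u → u ≤ v →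
          v - u ≤ (aa*v^3/3 + 2*hh*aa*v^2/2 + (aa*hh^2-1/3)*v)
               - (aa*u^3/3 + 2*hh*aa*u^2/2 + (aa*hh^2-1/3)*u) :=
        fun u v hu huv => vpReg2One r hh Rp aa u v hr0 hh0 hRpdef haadef hu huv
      have hzero : ∀ u : ℝ, u ≤ r →
          0 ≤ (aa*r^3/3 + 2*hh*aa*r^2/2 + (aa*hh^2-1/3)*r)
               - (aa*u^3/3 + 2*hh*aa*u^2/2 + (aa*hh^2-1/3)*u) :=
        fun u hu => vpReg2Zero r hh Rp aa u hr0 hh0 hRpdef haadef hu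
      apply reduction aa (2*hh*aa) (aa*hh^2-1/3)
      · intro x hx
        rw [← hνdef, max_eq_left (show (0:ℝ) ≤ m - R by rw [hmν, hRdef]; linarith)]
        have hyν : x - μ ≤ ν := by rw [hνdef]; linarith
        rcases le_or_gt x R with hxR | hxR
        · rw [max_eq_right (by linarith : x - R ≤ 0)]
          have hyr : x - μ ≤ r := by rw [hRdef] at hxR; linarith
          have p1 := hone r ν le_rfl hνr.le
          have p2 := hzero (x-μ) hyr
          have hlin : m - R = ν - r := by rw [hmν, hRdef]; ring
          linarith [p1, p2]
        · rw [max_eq_left (by linarith : (0:ℝ) ≤ x - R)]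
          have hyr : r ≤ x - μ := by rw [hRdef] at hxR; linarith
          have p1 := hone (x-μ) ν hyr hyν
          have hlin : m - R = ν - r := by rw [hmν, hRdef]; ring
          have hlin2 : x - R = (x-μ) - r := by rw [hRdef]; ring
          linarith [p1]
      · intro x hx
        rw [← hνdef, max_eq_left (show (0:ℝ) ≤ m - R by rw [hmν, hRdef]; linarith)]
        have hyν : ν ≤ x - μ := by rw [hνdef]; linarith
        rw [max_eq_left (show (0:ℝ) ≤ x - R by rw [hRdef]; rw [hmν] at hx; linarith)]
        have p1 := hone ν (x-μ) hνr.le hyν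
        have hlin : m - R = ν - r := by rw [hmν, hRdef]; ring
        have hlin2 : x - R = (x-μ) - r := by rw [hRdef]; ring
        linarith [p1]
      · rw [hbound]
        exact vpReg2Val r σ hh Rp aa hσpos hr0 hhdef hRpdef haadef
  refine ⟨main, ?_⟩
  have h40 : Real.sqrt (8/3) < Real.sqrt (40/9) := by
    apply Real.sqrt_lt_sqrt (by norm_num)
    norm_num
  have h1 := main (Real.sqrt (40/9)) h40
  have h2 : Real.sqrt (40/9)^2 = 40/9 := Real.sq_sqrt (by norm_num)
  rw [h2] at h1
  norm_num at h1
  convert h1 using 2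
  norm_num
end
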